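/- For every signal f, MTL formulas φ1 and φ2, times r, w ∈ ℝ≥0, interval I of nonnegative reals, index i ∈ {1,2,3}, and every t ∈ Pⁱ(φ1,φ2,r,w,I): f^t ⊨ φ1 U_I φ2 under the new satisfaction relation. -/

import Mathlib

open scoped NNReal ENNReal
open Set

namespace MITL

/-- A signal assigns to each nonnegative real time the set of atomic
propositions true at that time. -/
abbrev Signal (AP : Type*) := ℝ≥0 → Set AP

/-- The shifted signal `f^r`, defined by `f^r(t) = f(r+t)`. -/
def shift {AP : Type*} (f : Signal AP) (r : ℝ≥0) : Signal AP := fun t => f (r + t)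

/-- MTL formulas over atomic propositions `AP`; the timing constraints are
(intended to be) intervals of nonnegative reals. -/
inductive MTL (AP : Type*) where
  | top : MTL AP
  | bot : MTL AP
  | atom : AP → MTL AP
  | neg : MTL AP → MTL AP
  | disj : MTL AP → MTL AP → MTL AP
  | conj : MTL AP → MTL AP → MTL AP
  | until_ : MTL AP → MTL AP → Set ℝ≥0 → MTL AP
  | release : MTL AP → MTL AP → Set ℝ≥0 → MTL AP

variable {AP : Type*}

/-- The NEW satisfaction relation: `NSat f φ` means `f ⊨ φ`. -/
def NSat : Signal AP → MTL AP → Prop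
  | _, .top => True
  | _, .bot => False
  | f, .atom p => p ∈ f 0
  | f, .neg φ => ¬ NSat f φ
  | f, .disj φ1 φ2 => NSat f φ1 ∨ NSat f φ2
  | f, .conj φ1 φ2 => NSat f φ1 ∧ NSat f φ2
  | f, .until_ φ1 φ2 I =>
      ∃ t1 ∈ I, NSat (shift f t1) φ2 ∧ ∀ t2 ∈ Set.Ioo 0 t1, NSat (shift f t2) φ1
  | f, .release φ1 φ2 I =>
      (∀ t1 ∈ I, NSat (shift f t1) φ2) ∨
      (∃ t1 : ℝ≥0, 0 < t1 ∧ NSat (shift f t1) φ1 ∧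
        ∀ t2 ∈ Set.Ioc 0 t1 ∩ I, NSat (shift f t2) φ2) ∨
      (∃ t1 ∈ I ∪ {sInf I}, ∃ t2 ∈ I, t1 < t2 ∧
        ∀ t3 ∈ I, (t3 ≤ t1 → NSat (shift f t3) φ2) ∧
          (t1 < t3 → t3 ≤ t2 → NSat (shift f t3) φ1))

/-- Finite variability from the right of a signal `f` with respect to a formula
`φ`, relative to a satisfaction relation `Sat`. -/
def FinVarRight (Sat : Signal AP → MTL AP → Prop) (f : Signal AP) (φ : MTL AP) : Prop :=
  ∀ r : ℝ≥0,
    (∀ ε : ℝ≥0, 0 < ε → ∃ t ∈ Set.Ioo r (r + ε), Sat (shift f t) φ) →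
    ∃ ε : ℝ≥0, 0 < ε ∧ ∀ t ∈ Set.Ioo r (r + ε), Sat (shift f t) φ

/-- Finite variability from the left of a signal `f` with respect to a formula
`φ`, relative to a satisfaction relation `Sat`. -/
def FinVarLeft (Sat : Signal AP → MTL AP → Prop) (f : Signal AP) (φ : MTL AP) : Prop :=
  ∀ r : ℝ≥0, 0 < r →
    (∀ ε ∈ Set.Ioo 0 r, ∃ t ∈ Set.Ioo (r - ε) r, Sat (shift f t) φ) →
    ∃ ε ∈ Set.Ioo 0 r, ∀ t ∈ Set.Ioo (r - ε) r, Sat (shift f t) φ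

open Classical in
/-- `closeR I` is `I ∪ {sup I}`: the supremum is added when it is a real
number, i.e. when `I` is bounded above. -/
noncomputable def closeR (I : Set ℝ≥0) : Set ℝ≥0 :=
  if BddAbove I then I ∪ {sSup I} else I

/-- `(I ∪ {sup I}) \ {inf I}`. -/
noncomputable def openLCloseR (I : Set ℝ≥0) : Set ℝ≥0 := closeR I \ {sInf I}

open Classical in
/-- `(I ∪ {inf I}) \ {sup I}`. -/
noncomputable def openRCloseL (I : Set ℝ≥0) : Set ℝ≥0 :=
  (I ∪ {sInf I}) \ (if BddAbove I then {sSup I} else ∅)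

/-- The until-witness sets `Wⁱ(φ1,φ2)` for `i ∈ {1,2,3}`
(note that in `ℝ≥0`, truncated subtraction gives `w - ε = max (w - ε) 0`). -/
def UW (f : Signal AP) (φ1 φ2 : MTL AP) : ℕ → Set (ℝ≥0 × ℝ≥0)
  | 1 => {rw | rw.1 ≤ rw.2 ∧ (∀ t ∈ Set.Ioo rw.1 rw.2, NSat (shift f t) φ1) ∧
      NSat (shift f rw.2) φ2}
  | 2 => {rw | rw.1 < rw.2 ∧ ∃ ε : ℝ≥0, 0 < ε ∧
      (∀ t ∈ Set.Ioo rw.1 rw.2, NSat (shift f t) φ1) ∧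
      ∀ t ∈ Set.Ioo (rw.2 - ε) rw.2, NSat (shift f t) φ2}
  | 3 => {rw | rw.1 < rw.2 ∧ ∃ ε : ℝ≥0, 0 < ε ∧
      (∀ t ∈ Set.Ioo rw.1 (rw.2 + ε), NSat (shift f t) φ1) ∧
      ∀ t ∈ Set.Ioo rw.2 (rw.2 + ε), NSat (shift f t) φ2}
  | _ => ∅

/-- The until proof sets `Pⁱ(φ1,φ2,r,w,I)` for `i ∈ {1,2,3}`
(membership `w - t ∈ J` is expressed as `∃ d ∈ J, w = t + d`). -/
noncomputable def UP (f : Signal AP) (φ1 φ2 : MTL AP) (r w : ℝ≥0) (I : Set ℝ≥0) :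
    ℕ → Set ℝ≥0
  | 1 => {t | (r, w) ∈ UW f φ1 φ2 1 ∧ r ≤ t ∧ ∃ d ∈ I, w = t + d}
  | 2 => {t | (r, w) ∈ UW f φ1 φ2 2 ∧ r ≤ t ∧ ∃ d ∈ openLCloseR I, w = t + d}
  | 3 => {t | (r, w) ∈ UW f φ1 φ2 3 ∧ r ≤ t ∧ ∃ d ∈ openRCloseL I, w = t + d}
  | _ => ∅

lemma shift_shift (f : Signal AP) (a b : ℝ≥0) :
    shift (shift f a) b = shift f (a + b) := by
  funext u; simp [shift, add_assoc]

lemma openLCloseR_facts {I : Set ℝ≥0} {d : ℝ≥0} (hd : d ∈ openLCloseR I) :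
    I.Nonempty ∧ sInf I < d := by
  obtain ⟨hd1, hd2⟩ := hd
  simp only [Set.mem_singleton_iff] at hd2
  unfold closeR at hd1
  by_cases hB : BddAbove I
  · rw [if_pos hB] at hd1
    rcases hd1 with hdI | hds
    · exact ⟨⟨d, hdI⟩, lt_of_le_of_ne (csInf_le (OrderBot.bddBelow I) hdI) (Ne.symm hd2)⟩
    · simp only [Set.mem_singleton_iff] at hds
      rcases Set.eq_empty_or_nonempty I with rfl | hne
      · exfalso; apply hd2; rw [hds]; simp
      · exact ⟨hne, lt_of_le_of_ne (hds ▸ csInf_le_csSup hne (OrderBot.bddBelow I) hB)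
          (Ne.symm hd2)⟩
  · rw [if_neg hB] at hd1
    exact ⟨⟨d, hd1⟩, lt_of_le_of_ne (csInf_le (OrderBot.bddBelow I) hd1) (Ne.symm hd2)⟩

lemma exists_of_openLCloseR {I : Set ℝ≥0} (hI : I.OrdConnected) {d : ℝ≥0}
    (hd : d ∈ openLCloseR I) (c : ℝ≥0) (hc : c < d) :
    ∃ t1 ∈ I, max c (sInf I) < t1 ∧ t1 < d := by
  obtain ⟨hne, hinf⟩ := openLCloseR_facts hd
  set c' := max c (sInf I) with hc'
  have hc'd : c' < d := max_lt hc hinf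
  obtain ⟨hd1, _⟩ := hd
  -- get x ∈ I with c' < x ≤ d
  have hx : ∃ x ∈ I, c' < x ∧ x ≤ d := by
    by_cases hdI : d ∈ I
    · exact ⟨d, hdI, hc'd, le_rfl⟩
    · unfold closeR at hd1
      by_cases hB : BddAbove I
      · rw [if_pos hB] at hd1
        rcases hd1 with h | h
        · exact absurd h hdI
        · simp only [Set.mem_singleton_iff] at h
          obtain ⟨x, hxI, hxc⟩ := exists_lt_of_lt_csSup hne (h ▸ hc'd)
          exact ⟨x, hxI, hxc, h ▸ le_csSup hB hxI⟩
      · rw [if_neg hB] at hd1; exact absurd hd1 hdI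
  obtain ⟨x, hxI, hxc, hxd⟩ := hx
  rcases lt_or_eq_of_le hxd with hlt | rfl
  · exact ⟨x, hxI, hxc, hlt⟩
  · obtain ⟨y, hy1, hy2⟩ := exists_between hc'd
    obtain ⟨s, hsI, hs⟩ := exists_lt_of_csInf_lt hne
      (lt_of_le_of_lt (le_max_right c (sInf I)) hy1)
    exact ⟨y, hI.out hsI hxI ⟨hs.le, hy2.le⟩, hy1, hy2⟩

lemma exists_of_openRCloseL {I : Set ℝ≥0} (hI : I.OrdConnected) {d : ℝ≥0}
    (hd : d ∈ openRCloseL I) {ε : ℝ≥0} (hε : 0 < ε) :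
    ∃ t1 ∈ I, d < t1 ∧ t1 < d + ε := by
  obtain ⟨hd1, hd2⟩ := hd
  -- get x ∈ I with d < x
  have hx : ∃ x ∈ I, d < x := by
    by_cases hB : BddAbove I
    · rw [if_pos hB] at hd2
      simp only [Set.mem_singleton_iff] at hd2
      have hne : I.Nonempty := by
        rcases hd1 with h | h
        · exact ⟨d, h⟩
        · simp only [Set.mem_singleton_iff] at h
          rcases Set.eq_empty_or_nonempty I with rfl | hne
          · exfalso; apply hd2; rw [h]; simp
          · exact hne
      have hle : d ≤ sSup I := by
        rcases hd1 with h | h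
        · exact le_csSup hB h
        · simp only [Set.mem_singleton_iff] at h
          exact h ▸ csInf_le_csSup hne (OrderBot.bddBelow I) hB
      exact exists_lt_of_lt_csSup hne (lt_of_le_of_ne hle hd2)
    · obtain ⟨x, hxI, hx⟩ := not_bddAbove_iff.mp hB d
      exact ⟨x, hxI, hx⟩
  obtain ⟨x, hxI, hdx⟩ := hx
  obtain ⟨y, hy1, hy2⟩ := exists_between (lt_min hdx (lt_add_of_pos_right d hε))
  have hyI : y ∈ I := by
    rcases hd1 with h | h
    · exact hI.out h hxI ⟨hy1.le, (hy2.trans_le (min_le_left _ _)).le⟩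
    · simp only [Set.mem_singleton_iff] at h
      have hne : I.Nonempty := ⟨x, hxI⟩
      obtain ⟨s, hsI, hs⟩ := exists_lt_of_csInf_lt hne (h ▸ hy1)
      exact hI.out hsI hxI ⟨hs.le, (hy2.trans_le (min_le_left _ _)).le⟩
  exact ⟨y, hyI, hy1, hy2.trans_le (min_le_right _ _)⟩

theorem until_proofset_sound (f : Signal AP) (φ1 φ2 : MTL AP) (r w : ℝ≥0)
    (I : Set ℝ≥0) (hI : I.OrdConnected) (i : ℕ) (hi : i ∈ ({1, 2, 3} : Set ℕ))
    (t : ℝ≥0) (ht : t ∈ UP f φ1 φ2 r w I i) :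
    NSat (shift f t) (.until_ φ1 φ2 I) := by
  simp only [Set.mem_insert_iff, Set.mem_singleton_iff] at hi
  show ∃ t1 ∈ I, NSat (shift (shift f t) t1) φ2 ∧
    ∀ t2 ∈ Set.Ioo 0 t1, NSat (shift (shift f t) t2) φ1
  rcases hi with rfl | rfl | rfl
  · obtain ⟨⟨hrw, h1, h2⟩, hrt, d, hdI, hwd⟩ := ht
    refine ⟨d, hdI, ?_, ?_⟩
    · rw [shift_shift, ← hwd]; exact h2
    · intro t2 ht2
      rw [shift_shift]
      refine h1 _ ⟨lt_of_le_of_lt hrt (lt_add_of_pos_right t ht2.1), ?_⟩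
      calc t + t2 < t + d := add_lt_add_right ht2.2 t
        _ = w := hwd.symm
  · obtain ⟨⟨hrw, ε, hε, h1, h2⟩, hrt, d, hd, hwd⟩ := ht
    obtain ⟨hne, hinf⟩ := openLCloseR_facts hd
    have hd0 : 0 < d := lt_of_le_of_lt zero_le hinf
    obtain ⟨t1, ht1I, ht1gt, ht1lt⟩ :=
      exists_of_openLCloseR hI hd (d - ε) (tsub_lt_self hd0 hε)
    have htd : t + t1 < w := by
      rw [hwd]; exact add_lt_add_right ht1lt t
    refine ⟨t1, ht1I, ?_, ?_⟩
    · rw [shift_shift]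
      refine h2 _ ⟨?_, htd⟩
      calc w - ε = t + d - ε := by rw [hwd]
        _ ≤ t + (d - ε) := add_tsub_le_assoc
        _ < t + t1 := add_lt_add_right
            (lt_of_le_of_lt (le_max_left _ _) ht1gt) t
    · intro t2 ht2
      rw [shift_shift]
      refine h1 _ ⟨lt_of_le_of_lt hrt (lt_add_of_pos_right t ht2.1), ?_⟩
      exact lt_trans (add_lt_add_right ht2.2 t) htd
  · obtain ⟨⟨hrw, ε, hε, h1, h2⟩, hrt, d, hd, hwd⟩ := ht
    obtain ⟨t1, ht1I, hdt1, ht1lt⟩ := exists_of_openRCloseL hI hd hε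
    have htd : t + t1 < w + ε := by
      rw [hwd, add_assoc]; exact add_lt_add_right ht1lt t
    refine ⟨t1, ht1I, ?_, ?_⟩
    · rw [shift_shift]
      refine h2 _ ⟨?_, htd⟩
      rw [hwd]; exact add_lt_add_right hdt1 t
    · intro t2 ht2
      rw [shift_shift]
      refine h1 _ ⟨lt_of_le_of_lt hrt (lt_add_of_pos_right t ht2.1), ?_⟩
      exact lt_trans (add_lt_add_right ht2.2 t) htd

end MITL
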